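/- In a dynamic graph on n ≥ 2 nodes that is connected in every round, any token-forwarding process in which exactly one node holds a token in each round and may pass it to one neighbor, and in which the token is not replicated, can be prevented by an adaptive adversary from ever reaching a fixed target node: there exists an adversarial choice of connected graphs G(r) such that for all rounds r the token never resides at the target node, provided n ≥ 3. -/

import Mathlib

/-- The complete graph with one edge `s(p,v)` deleted is connected when there
are at least 3 vertices. -/
lemma deleteOneEdge_connected {V : Type*} [Fintype V] (hn : 3 ≤ Fintype.card V)
    (p v : V) : ((⊤ : SimpleGraph V).deleteEdges {s(p, v)}).Connected := by
  classical
  set G := (⊤ : SimpleGraph V).deleteEdges {s(p, v)} with hG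
  have hne : Nonempty V := Fintype.card_pos_iff.mp (by omega)
  obtain ⟨u, hu⟩ : ∃ u : V, u ∉ ({p, v} : Finset V) := by
    have hns : ¬ (Finset.univ ⊆ ({p, v} : Finset V)) := by
      intro h
      have h1 := Finset.card_le_card h
      have h2 : ({p, v} : Finset V).card ≤ 2 := Finset.card_insert_le p {v} |>.trans (by simp)
      simp [Finset.card_univ] at h1
      omega
    obtain ⟨u, -, hu⟩ := Finset.not_subset.mp hns
    exact ⟨u, hu⟩
  simp only [Finset.mem_insert, Finset.mem_singleton, not_or] at hu
  have hub : ∀ z : V, z ≠ u → G.Adj z u := by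
    intro z hz
    simp only [hG, SimpleGraph.deleteEdges_adj, SimpleGraph.top_adj, Set.mem_singleton_iff]
    refine ⟨hz, ?_⟩
    intro h
    rw [Sym2.eq_iff] at h
    rcases h with ⟨_, h⟩ | ⟨_, h⟩
    · exact hu.2 h
    · exact hu.1 h
  constructor
  · intro a b
    by_cases hab : a = b
    · exact hab ▸ SimpleGraph.Reachable.refl a
    by_cases ha : a = u
    · subst ha
      exact (hub b (fun h => hab h.symm)).symm.reachable
    by_cases hb : b = u
    · subst hb
      exact (hub a ha).reachable
    · exact ((hub a ha).reachable).trans ((hub b hb).symm.reachable)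

theorem token_forwarding_impossible {V : Type*} [Fintype V]
    (hn : 3 ≤ Fintype.card V) (w v : V) (hvw : v ≠ w)
    (σ : ℕ → V → V) :
    ∃ G : ℕ → SimpleGraph V, (∀ r, (G r).Connected) ∧
      ∀ x : ℕ → V, x 0 = w →
        (∀ r, ((G (r + 1)).Adj (x r) (σ r (x r)) → x (r + 1) = σ r (x r)) ∧
              (¬ (G (r + 1)).Adj (x r) (σ r (x r)) → x (r + 1) = x r)) →
        ∀ r, x r ≠ v := by
  classical
  have hne : Nonempty V := Fintype.card_pos_iff.mp (by omega)
  -- the deterministic trajectory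
  let traj : ℕ → V := fun r => Nat.rec w (fun r p => if σ r p = v then p else σ r p) r
  have traj_succ : ∀ r, traj (r + 1) = if σ r (traj r) = v then traj r else σ r (traj r) :=
    fun r => rfl
  -- adversarial graphs
  let Gr : ℕ → SimpleGraph V := fun r => Nat.rec ⊤ (fun r _ =>
      if σ r (traj r) = v then (⊤ : SimpleGraph V).deleteEdges {s(traj r, v)} else ⊤) r
  have Gr_succ : ∀ r, Gr (r + 1) =
      if σ r (traj r) = v then (⊤ : SimpleGraph V).deleteEdges {s(traj r, v)} else ⊤ :=
    fun r => rfl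
  refine ⟨Gr, ?_, ?_⟩
  · intro r
    cases r with
    | zero => exact SimpleGraph.connected_top
    | succ r =>
      rw [Gr_succ]
      split
      · exact deleteOneEdge_connected hn _ _
      · exact SimpleGraph.connected_top
  · intro x hx0 hdyn
    have key : ∀ r, x r = traj r := by
      intro r
      induction r with
      | zero => exact hx0
      | succ r ih =>
        rcases hdyn r with ⟨hmove, hkeep⟩
        rw [traj_succ]
        by_cases hv : σ r (traj r) = v
        · rw [if_pos hv]
          have hnadj : ¬ (Gr (r + 1)).Adj (x r) (σ r (x r)) := by
            rw [Gr_succ, if_pos hv, ih, hv]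
            simp [SimpleGraph.deleteEdges_adj]
          rw [hkeep hnadj, ih]
        · rw [if_neg hv]
          rcases eq_or_ne (σ r (traj r)) (traj r) with heq | heq
          · have hnadj : ¬ (Gr (r + 1)).Adj (x r) (σ r (x r)) := by
              rw [Gr_succ, if_neg hv, ih]
              exact fun h => h.ne heq.symm
            rw [hkeep hnadj, ih, heq]
          · have hadj : (Gr (r + 1)).Adj (x r) (σ r (x r)) := by
              rw [Gr_succ, if_neg hv, ih]
              simpa using fun h => heq h.symm
            rw [hmove hadj, ih]
    have tv : ∀ r, traj r ≠ v := by
      intro r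
      induction r with
      | zero => exact fun h => hvw h.symm
      | succ r ih =>
        rw [traj_succ]
        by_cases hv : σ r (traj r) = v
        · simpa [hv] using ih
        · simp only [hv, if_false]; exact hv
    intro r
    rw [key r]
    exact tv r
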